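/- arXiv:1207.3947 — 3 statements merged into one kernel-verified Lean document; each statement's English description precedes it below -/
import Mathlib

section
/- In the ring of formal power series in t, u, v over the Laurent polynomial ring ℤ[s,s^{−1}], let C := Σ_{m,l,l' ≥ 0} Σ_{k ∈ ℤ} α^{(m)}_{k,l,l'} t^m u^l v^{l'} s^k (for each (m,l,l') the inner sum over k is finite). Then C · (1 − t²(s² + s^{−2} + 2uv) + t⁴(u²−1)(v²−1)) = 1 + t(u+s) + t²(vs + us^{−1} − s^{−2} − uv) + t³(1−u²)(v − s^{−1}). -/
/-- The integers `α^{(m)}_{k,l,l'}`, defined by the recursion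
`α^{(0)}_{k,l,l'} = δ_{k,0}δ_{l,0}δ_{l',0}`,
`α^{(m+1)}_{k,l,l'} = α^{(m)}_{k-1,l',l} + α^{(m)}_{-k,l',l-1}`, with `α^{(m)}_{k,l,l'} = 0`
whenever `l < 0` or `l' < 0`. -/
def alternatingAlpha : ℕ → ℤ → ℤ → ℤ → ℤ
  | 0, k, l, l' => if k = 0 ∧ l = 0 ∧ l' = 0 then 1 else 0
  | m + 1, k, l, l' =>
      if l < 0 ∨ l' < 0 then 0
      else alternatingAlpha m (k - 1) l' l + alternatingAlpha m (-k) l' (l - 1)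

/-- The generating function `C(t,u,v,s) = Σ_{m,l,l'≥0} Σ_{k∈ℤ} α^{(m)}_{k,l,l'} t^m u^l v^{l'} s^k`
as a formal power series in `t = X 0`, `u = X 1`, `v = X 2` over `ℤ[s,s⁻¹]`. -/
noncomputable def alphaGenFun : MvPowerSeries (Fin 3) (LaurentPolynomial ℤ) :=
  fun d => ∑ᶠ k : ℤ,
    alternatingAlpha (d 0) k ((d 1 : ℤ)) ((d 2 : ℤ)) • LaurentPolynomial.T k

/-- The constant power series with value `s^k`. -/
noncomputable def sPow (k : ℤ) : MvPowerSeries (Fin 3) (LaurentPolynomial ℤ) :=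
  MvPowerSeries.C (σ := Fin 3) (R := LaurentPolynomial ℤ) (LaurentPolynomial.T k)


namespace AlphaProof
open LaurentPolynomial

lemma alpha_zero_of_neg : ∀ (m : ℕ) (k l l' : ℤ), l < 0 ∨ l' < 0 → alternatingAlpha m k l l' = 0
  | 0, k, l, l', h => by
    rw [alternatingAlpha, if_neg]; rintro ⟨-, rfl, rfl⟩; omega
  | m+1, k, l, l', h => by rw [alternatingAlpha, if_pos h]

lemma alpha_zero_of_lt : ∀ (m : ℕ) (k l l' : ℤ), (m : ℤ) < |k| → alternatingAlpha m k l l' = 0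
  | 0, k, l, l', h => by
    rw [alternatingAlpha, if_neg]; rintro ⟨rfl, -, -⟩; simp at h
  | m+1, k, l, l', h => by
    rw [lt_abs] at h; push_cast at h
    rw [alternatingAlpha,
      alpha_zero_of_lt m (k-1) _ _ (by rw [lt_abs]; omega),
      alpha_zero_of_lt m (-k) _ _ (by rw [lt_abs]; omega)]
    simp

lemma alpha_supp (m : ℕ) (l l' : ℤ) :
    (Function.support fun k : ℤ => alternatingAlpha m k l l').Finite := by
  apply (Set.finite_Icc (-(m : ℤ)) m).subset
  intro k hk
  simp only [Function.mem_support] at hk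
  by_contra hc
  simp only [Set.mem_Icc] at hc
  exact hk (alpha_zero_of_lt m k l l' (by rw [lt_abs]; omega))

noncomputable def aZ (m : ℕ) (l l' : ℤ) : LaurentPolynomial ℤ :=
  ∑ᶠ k : ℤ, alternatingAlpha m k l l' • T k

noncomputable def bZ (m : ℕ) (l l' : ℤ) : LaurentPolynomial ℤ := invert (aZ m l l')

lemma aZ_neg {l l' : ℤ} (m : ℕ) (h : l < 0 ∨ l' < 0) : aZ m l l' = 0 := by
  simp [aZ, alpha_zero_of_neg m _ _ _ h]

lemma aZ_zero (l l' : ℤ) : aZ 0 l l' = if l = 0 ∧ l' = 0 then 1 else 0 := by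
  rw [aZ]
  rw [show (fun k : ℤ => alternatingAlpha 0 k l l' • (T k : LaurentPolynomial ℤ))
      = fun k : ℤ => (if k = 0 ∧ l = 0 ∧ l' = 0 then (1:ℤ) else 0) • (T k : LaurentPolynomial ℤ)
    from rfl]
  rw [finsum_eq_single _ 0 (fun x hx => by simp [hx])]
  split_ifs with h1 h2 h3 <;> simp_all [T_zero]

lemma aZ_succ (m : ℕ) (l l' : ℤ) :
    aZ (m+1) l l' = T 1 * aZ m l' l + bZ m l' (l-1) := by
  rcases lt_or_ge l 0 with h | hl
  · rw [aZ_neg _ (Or.inl h), aZ_neg _ (Or.inr h), bZ,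
      aZ_neg _ (Or.inr (by omega)), map_zero, add_zero, mul_zero]
  rcases lt_or_ge l' 0 with h | hl'
  · rw [aZ_neg _ (Or.inr h), aZ_neg _ (Or.inl h), bZ, aZ_neg _ (Or.inl h),
      map_zero, add_zero, mul_zero]
  have key : (fun k : ℤ => alternatingAlpha (m+1) k l l' • (T k : LaurentPolynomial ℤ))
      = fun k : ℤ => alternatingAlpha m (k-1) l' l • (T k : LaurentPolynomial ℤ)
        + alternatingAlpha m (-k) l' (l-1) • (T k : LaurentPolynomial ℤ) := by
    ext k
    rw [show alternatingAlpha (m+1) k l l'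
        = if l < 0 ∨ l' < 0 then 0
          else alternatingAlpha m (k - 1) l' l + alternatingAlpha m (-k) l' (l - 1) from rfl,
      if_neg (by omega), add_smul]
  simp only [aZ, bZ]
  rw [key, finsum_add_distrib
    (((alpha_supp m l' l).preimage (Set.injOn_of_injective (fun (a b : ℤ) (h : a - 1 = b - 1) => by omega))).subset
      (by intro k hk; simp only [Function.mem_support, Set.mem_preimage] at hk ⊢
          exact fun hz => hk (by rw [hz, zero_smul])))
    (((alpha_supp m l' (l-1)).preimage (Set.injOn_of_injective (fun (a b : ℤ) (h : -a = -b) => by omega))).subset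
      (by intro k hk; simp only [Function.mem_support, Set.mem_preimage] at hk ⊢
          exact fun hz => hk (by rw [hz, zero_smul])))]
  congr 1
  · rw [mul_finsum (fun k : ℤ => alternatingAlpha m k l' l • (T k : LaurentPolynomial ℤ)) (T 1)]
    rw [← finsum_comp_equiv (Equiv.subRight (1:ℤ))
      (f := fun k : ℤ => T 1 * (alternatingAlpha m k l' l • (T k : LaurentPolynomial ℤ)))]
    congr 1; ext k
    simp only [Equiv.subRight_apply]
    rw [mul_smul_comm, ← T_add]
    ring_nf
  · have h : invert (∑ᶠ k : ℤ, alternatingAlpha m k l' (l-1) • (T k : LaurentPolynomial ℤ))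
        = ∑ᶠ k : ℤ, invert (alternatingAlpha m k l' (l-1) • (T k : LaurentPolynomial ℤ)) :=
      AddEquiv.map_finsum (invert (R := ℤ)).toRingEquiv.toAddEquiv _
    rw [h, ← finsum_comp_equiv (Equiv.neg ℤ)
      (f := fun k : ℤ => invert (alternatingAlpha m k l' (l-1) • (T k : LaurentPolynomial ℤ)))]
    congr 1; ext k
    simp [map_zsmul]

lemma invert_aZ (m : ℕ) (l l' : ℤ) : invert (aZ m l l') = bZ m l l' := rfl
lemma invert_bZ (m : ℕ) (l l' : ℤ) : invert (bZ m l l') = aZ m l l' := involutive_invert _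

lemma bZ_neg {l l' : ℤ} (m : ℕ) (h : l < 0 ∨ l' < 0) : bZ m l l' = 0 := by
  rw [bZ, aZ_neg m h, map_zero]

lemma bZ_zero (l l' : ℤ) : bZ 0 l l' = if l = 0 ∧ l' = 0 then 1 else 0 := by
  rw [bZ, aZ_zero]; split_ifs <;> simp

lemma bZ_succ (m : ℕ) (l l' : ℤ) :
    bZ (m+1) l l' = T (-1) * bZ m l' l + aZ m l' (l-1) := by
  rw [bZ, aZ_succ, map_add, map_mul, invert_T, invert_aZ, invert_bZ]

lemma aZ_two (m : ℕ) (l l' : ℤ) :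
    aZ (m+2) l l' = T 2 * aZ m l l' + T 1 * bZ m l (l'-1)
      + T (-1) * bZ m (l-1) l' + aZ m (l-1) (l'-1) := by
  rw [show m+2 = (m+1)+1 from rfl, aZ_succ, aZ_succ, bZ_succ,
    show (T 2 : LaurentPolynomial ℤ) = T 1 * T 1 by rw [← T_add]; norm_num]
  ring

lemma bZ_two (m : ℕ) (l l' : ℤ) :
    bZ (m+2) l l' = T (-2) * bZ m l l' + T (-1) * aZ m l (l'-1)
      + T 1 * aZ m (l-1) l' + bZ m (l-1) (l'-1) := by
  rw [bZ, aZ_two]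
  simp only [map_add, map_mul, invert_T, invert_aZ, invert_bZ, neg_neg]

lemma aZ_four (m : ℕ) (l l' : ℤ) :
    aZ (m+4) l l' = (T 2 + T (-2)) * aZ (m+2) l l' + 2 * aZ (m+2) (l-1) (l'-1)
      - aZ m (l-2) (l'-2) + aZ m (l-2) l' + aZ m l (l'-2) - aZ m l l' := by
  rw [show m+4 = (m+2)+2 from rfl]
  rw [aZ_two (m+2) l l', bZ_two, bZ_two, aZ_two m l l', aZ_two m (l-1) (l'-1)]
  simp only [sub_sub, show (1:ℤ)+1 = 2 by norm_num]
  ring_nf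
  simp only [← T_add]
  norm_num
  ring

lemma aZ_one (l l' : ℤ) :
    aZ 1 l l' = (if l = 0 ∧ l' = 0 then T 1 else 0) + (if l = 1 ∧ l' = 0 then 1 else 0) := by
  rw [show (1:ℕ) = 0+1 from rfl, aZ_succ, aZ_zero, bZ_zero]
  simp only [sub_eq_zero]
  by_cases h1 : l = 0 <;> by_cases h2 : l = 1 <;> by_cases h3 : l' = 0 <;>
    simp_all [and_comm] <;> ring

lemma bZ_one (l l' : ℤ) :
    bZ 1 l l' = (if l = 0 ∧ l' = 0 then T (-1) else 0) + (if l = 1 ∧ l' = 0 then 1 else 0) := by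
  rw [bZ, aZ_one, map_add]
  split_ifs <;> simp

noncomputable def AZ (m l l' : ℤ) : LaurentPolynomial ℤ :=
  if 0 ≤ m then aZ m.toNat l l' else 0

lemma AZ_coe (m : ℕ) (l l' : ℤ) : AZ m l l' = aZ m l l' := by simp [AZ]

lemma AZ_neg_left {m : ℤ} (h : m < 0) (l l' : ℤ) : AZ m l l' = 0 := by
  simp [AZ, not_le.2 h]

noncomputable def Rc (m : ℕ) (l l' : ℤ) : LaurentPolynomial ℤ :=
  (if m = 0 ∧ l = 0 ∧ l' = 0 then 1 else 0)
  + (if m = 1 ∧ l = 1 ∧ l' = 0 then 1 else 0) + (if m = 1 ∧ l = 0 ∧ l' = 0 then T 1 else 0)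
  + (if m = 2 ∧ l = 0 ∧ l' = 1 then T 1 else 0) + (if m = 2 ∧ l = 1 ∧ l' = 0 then T (-1) else 0)
  - (if m = 2 ∧ l = 0 ∧ l' = 0 then T (-2) else 0) - (if m = 2 ∧ l = 1 ∧ l' = 1 then 1 else 0)
  + (if m = 3 ∧ l = 0 ∧ l' = 1 then 1 else 0) - (if m = 3 ∧ l = 0 ∧ l' = 0 then T (-1) else 0)
  - (if m = 3 ∧ l = 2 ∧ l' = 1 then 1 else 0) + (if m = 3 ∧ l = 2 ∧ l' = 0 then T (-1) else 0)

set_option maxHeartbeats 2000000 in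
lemma main : ∀ (m : ℕ) (l l' : ℤ),
    AZ m l l' - (T 2 + T (-2)) * AZ ((m : ℤ) - 2) l l' - 2 * AZ ((m : ℤ) - 2) (l-1) (l'-1)
      + AZ ((m : ℤ) - 4) (l-2) (l'-2) - AZ ((m : ℤ) - 4) (l-2) l' - AZ ((m : ℤ) - 4) l (l'-2)
      + AZ ((m : ℤ) - 4) l l' = Rc m l l'
  | 0, l, l' => by
    rw [AZ_coe, aZ_zero, AZ_neg_left (by norm_num), AZ_neg_left (by norm_num),
      AZ_neg_left (by norm_num), AZ_neg_left (by norm_num), AZ_neg_left (by norm_num),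
      AZ_neg_left (by norm_num), Rc]
    norm_num
  | 1, l, l' => by
    rw [AZ_coe, aZ_one, AZ_neg_left (by norm_num), AZ_neg_left (by norm_num),
      AZ_neg_left (by norm_num), AZ_neg_left (by norm_num), AZ_neg_left (by norm_num),
      AZ_neg_left (by norm_num), Rc]
    norm_num
    ring
  | 2, l, l' => by
    rw [show ((2:ℕ):ℤ) - 2 = ((0:ℕ):ℤ) by norm_num, AZ_coe, AZ_coe, AZ_coe,
      show (2:ℕ) = 0+2 from rfl, aZ_two, aZ_zero, aZ_zero, bZ_zero, bZ_zero,
      AZ_neg_left (by norm_num), AZ_neg_left (by norm_num), AZ_neg_left (by norm_num),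
      AZ_neg_left (by norm_num), Rc]
    simp only [sub_eq_zero, sub_eq_iff_eq_add]
    norm_num
    by_cases h1 : l = 0 <;> by_cases h2 : l = 1 <;> by_cases h3 : l = 2 <;>
      by_cases h4 : l' = 0 <;> by_cases h5 : l' = 1 <;>
      simp only [h1, h2, h3, h4, h5] <;>
      simp only [show ((0:ℤ)=1)=False by decide, show ((1:ℤ)=0)=False by decide,
        show ((0:ℤ)=2)=False by decide, show ((2:ℤ)=0)=False by decide,
        show ((1:ℤ)=2)=False by decide, show ((2:ℤ)=1)=False by decide,
        eq_self_iff_true, and_true, true_and, and_false, false_and, and_self,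
        if_true, if_false, ite_true, ite_false, mul_zero, zero_mul, add_zero, zero_add,
        mul_one, one_mul, sub_zero, zero_sub] <;>
      first
        | rfl
        | ring1
        | ((try ring_nf); simp only [T_pow, ← T_add]; norm_num [T_zero]; try ring1)
  | 3, l, l' => by
    rw [show ((3:ℕ):ℤ) - 2 = ((1:ℕ):ℤ) by norm_num, AZ_coe, AZ_coe, AZ_coe,
      show (3:ℕ) = 1+2 from rfl, aZ_two, aZ_one, aZ_one, bZ_one, bZ_one,
      AZ_neg_left (by norm_num), AZ_neg_left (by norm_num), AZ_neg_left (by norm_num),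
      AZ_neg_left (by norm_num), Rc]
    simp only [sub_eq_zero, sub_eq_iff_eq_add]
    norm_num
    by_cases h1 : l = 0 <;> by_cases h2 : l = 1 <;> by_cases h3 : l = 2 <;>
      by_cases h4 : l' = 0 <;> by_cases h5 : l' = 1 <;>
      simp only [h1, h2, h3, h4, h5] <;>
      simp only [show ((0:ℤ)=1)=False by decide, show ((1:ℤ)=0)=False by decide,
        show ((0:ℤ)=2)=False by decide, show ((2:ℤ)=0)=False by decide,
        show ((1:ℤ)=2)=False by decide, show ((2:ℤ)=1)=False by decide,
        eq_self_iff_true, and_true, true_and, and_false, false_and, and_self,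
        if_true, if_false, ite_true, ite_false, mul_zero, zero_mul, add_zero, zero_add,
        mul_one, one_mul, sub_zero, zero_sub] <;>
      first
        | rfl
        | ring1
        | ((try ring_nf); simp only [T_pow, ← T_add]; norm_num [T_zero]; try ring1)
  | (n+4), l, l' => by
    rw [show ((n+4:ℕ):ℤ) - 2 = ((n+2:ℕ):ℤ) by push_cast; ring,
      show ((n+4:ℕ):ℤ) - 4 = ((n:ℕ):ℤ) by push_cast; ring,
      AZ_coe, AZ_coe, AZ_coe, AZ_coe, AZ_coe, AZ_coe, AZ_coe, Rc,
      if_neg (by omega), if_neg (by omega), if_neg (by omega), if_neg (by omega),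
      if_neg (by omega), if_neg (by omega), if_neg (by omega), if_neg (by omega),
      if_neg (by omega), if_neg (by omega), if_neg (by omega)]
    have h := aZ_four n l l'
    linear_combination h

open MvPowerSeries

noncomputable def mon (a b c : ℕ) (r : LaurentPolynomial ℤ) :
    MvPowerSeries (Fin 3) (LaurentPolynomial ℤ) :=
  MvPowerSeries.monomial (Finsupp.single 0 a + Finsupp.single 1 b + Finsupp.single 2 c) r

lemma mon_eq (a b c : ℕ) (r : LaurentPolynomial ℤ) :
    mon a b c r = MvPowerSeries.C (σ := Fin 3) (R := LaurentPolynomial ℤ) r * X 0 ^ a * X 1 ^ b * X 2 ^ c := by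
  rw [mon, X_pow_eq, X_pow_eq, X_pow_eq, ← monomial_zero_eq_C_apply,
    monomial_mul_monomial, monomial_mul_monomial, monomial_mul_monomial]
  simp

lemma coeff_agf (e : Fin 3 →₀ ℕ) :
    MvPowerSeries.coeff e alphaGenFun = aZ (e 0) (e 1) (e 2) := rfl

lemma single_sum_apply (a b c : ℕ) :
    ((Finsupp.single (0 : Fin 3) a + Finsupp.single 1 b + Finsupp.single 2 c : Fin 3 →₀ ℕ) 0 = a)
    ∧ ((Finsupp.single (0 : Fin 3) a + Finsupp.single 1 b + Finsupp.single 2 c : Fin 3 →₀ ℕ) 1 = b)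
    ∧ ((Finsupp.single (0 : Fin 3) a + Finsupp.single 1 b + Finsupp.single 2 c : Fin 3 →₀ ℕ) 2 = c) := by
  refine ⟨?_, ?_, ?_⟩ <;> simp [Finsupp.single_apply]

lemma AZ_neg_mid {l : ℤ} (m l' : ℤ) (h : l < 0) : AZ m l l' = 0 := by
  rw [AZ]; split_ifs with h'
  · exact aZ_neg _ (Or.inl h)
  · rfl

lemma AZ_neg_right {l' : ℤ} (m l : ℤ) (h : l' < 0) : AZ m l l' = 0 := by
  rw [AZ]; split_ifs with h'
  · exact aZ_neg _ (Or.inr h)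
  · rfl

lemma coeff_mul_mon (d : Fin 3 →₀ ℕ) (a b c : ℕ) (r : LaurentPolynomial ℤ) :
    MvPowerSeries.coeff d (alphaGenFun * mon a b c r)
      = AZ ((d 0 : ℤ) - a) ((d 1 : ℤ) - b) ((d 2 : ℤ) - c) * r := by
  rw [mon, MvPowerSeries.coeff_mul_monomial]
  obtain ⟨e0, e1, e2⟩ := single_sum_apply a b c
  split_ifs with h
  · have h' := Finsupp.le_def.mp h
    have h0 : a ≤ d 0 := by have := h' 0; rwa [e0] at this
    have h1 : b ≤ d 1 := by have := h' 1; rwa [e1] at this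
    have h2 : c ≤ d 2 := by have := h' 2; rwa [e2] at this
    rw [coeff_agf, Finsupp.tsub_apply, Finsupp.tsub_apply, Finsupp.tsub_apply,
      e0, e1, e2, ← AZ_coe]
    congr 2 <;> push_cast [Nat.cast_sub, h0, h1, h2] <;> ring
  · have : ¬(a ≤ d 0 ∧ b ≤ d 1 ∧ c ≤ d 2) := by
      intro ⟨h0, h1, h2⟩
      exact h (Finsupp.le_def.mpr fun i => by
        fin_cases i
        · exact e0.trans_le h0
        · exact e1.trans_le h1
        · exact e2.trans_le h2)
    rcases not_and_or.mp this with h0 | h12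
    · rw [AZ_neg_left (by push_cast; omega), zero_mul]
    rcases not_and_or.mp h12 with h1 | h2
    · rw [AZ_neg_mid _ _ (by push_cast; omega), zero_mul]
    · rw [AZ_neg_right _ _ (by push_cast; omega), zero_mul]

lemma coeff_mon (d : Fin 3 →₀ ℕ) (a b c : ℕ) (r : LaurentPolynomial ℤ) :
    MvPowerSeries.coeff d (mon a b c r)
      = if d 0 = a ∧ (d 1 : ℤ) = b ∧ (d 2 : ℤ) = c then r else 0 := by
  rw [mon, MvPowerSeries.coeff_monomial]
  obtain ⟨e0, e1, e2⟩ := single_sum_apply a b c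
  refine if_congr ?_ rfl rfl
  constructor
  · rintro rfl; exact ⟨e0, by rw [e1], by rw [e2]⟩
  · rintro ⟨h0, h1, h2⟩
    ext i
    fin_cases i
    · exact h0.trans e0.symm
    · exact (Nat.cast_injective h1).trans e1.symm
    · exact (Nat.cast_injective h2).trans e2.symm

end AlphaProof

open AlphaProof LaurentPolynomial

open MvPowerSeries in
/-- The functional equation for the generating function of the `α^{(m)}_{k,l,l'}`:
`C·(1 − t²(s² + s⁻² + 2uv) + t⁴(u²−1)(v²−1))
  = 1 + t(u+s) + t²(vs + us⁻¹ − s⁻² − uv) + t³(1−u²)(v − s⁻¹)`. -/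
theorem alphaGenFun_eq :
    alphaGenFun *
      (1 - (X 0 : MvPowerSeries (Fin 3) (LaurentPolynomial ℤ)) ^ 2 *
          (sPow 2 + sPow (-2) + 2 * X 1 * X 2) +
        (X 0) ^ 4 * ((X 1) ^ 2 - 1) * ((X 2) ^ 2 - 1)) =
    1 + (X 0 : MvPowerSeries (Fin 3) (LaurentPolynomial ℤ)) * (X 1 + sPow 1) +
      (X 0) ^ 2 * (X 2 * sPow 1 + X 1 * sPow (-1) - sPow (-2) - X 1 * X 2) +
      (X 0) ^ 3 * (1 - (X 1) ^ 2) * (X 2 - sPow (-1)) := by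
  have hL : (1 - (X 0 : MvPowerSeries (Fin 3) (LaurentPolynomial ℤ)) ^ 2 *
          (sPow 2 + sPow (-2) + 2 * X 1 * X 2) +
        (X 0) ^ 4 * ((X 1) ^ 2 - 1) * ((X 2) ^ 2 - 1))
      = mon 0 0 0 1 - mon 2 0 0 (T 2) - mon 2 0 0 (T (-2)) - mon 2 1 1 2
        + (mon 4 2 2 1 - mon 4 2 0 1 - mon 4 0 2 1 + mon 4 0 0 1) := by
    simp only [mon_eq, sPow, map_one, map_ofNat]
    ring
  have hR : (1 + (X 0 : MvPowerSeries (Fin 3) (LaurentPolynomial ℤ)) * (X 1 + sPow 1) +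
      (X 0) ^ 2 * (X 2 * sPow 1 + X 1 * sPow (-1) - sPow (-2) - X 1 * X 2) +
      (X 0) ^ 3 * (1 - (X 1) ^ 2) * (X 2 - sPow (-1)))
      = mon 0 0 0 1 + (mon 1 1 0 1 + mon 1 0 0 (T 1))
        + (mon 2 0 1 (T 1) + mon 2 1 0 (T (-1)) - mon 2 0 0 (T (-2)) - mon 2 1 1 1)
        + (mon 3 0 1 1 - mon 3 0 0 (T (-1)) - mon 3 2 1 1 + mon 3 2 0 (T (-1))) := by
    simp only [mon_eq, sPow, map_one, map_ofNat]
    ring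
  rw [hL, hR]
  apply MvPowerSeries.ext
  intro d
  simp only [mul_sub, mul_add, map_add, map_sub, coeff_mul_mon, coeff_mon]
  push_cast
  simp only [sub_zero]
  have h := AlphaProof.main (d 0) (d 1) (d 2)
  simp only [Rc] at h
  linear_combination h
end

section
/- Set α^{(m)}_{k,L} := Σ_{l,l' ≥ 0, l+l' = L} α^{(m)}_{k,l,l'} for m, L ∈ ℤ_{≥0} and k ∈ ℤ. Then: (i) α^{(m)}_{k,L} = 0 unless L ≤ m, |k| ≤ m − L and m + k ≡ L (mod 2); (ii) α^{(m)}_{k,0} = 1 if k = m and 0 otherwise; (iii) if L is even with 2 ≤ L ≤ m, |k| ≤ m − L and m + k ≡ L (mod 2), then α^{(m)}_{k,L} = C((m+k)/2, (m+k−L)/2) · C((m−k−2)/2, (m−k−L)/2); (iv) if L is odd with L ≤ m, |k| ≤ m − L and m + k ≡ L (mod 2), then α^{(m)}_{k,L} = C((m+k−1)/2, (m+k−L)/2) · C((m−k−1)/2, (m−k−L)/2); here C(p,q) denotes the binomial coefficient. -/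
/-- `α^{(m)}_{k,L} = Σ_{l+l' = L} α^{(m)}_{k,l,l'}`. -/
def alternatingAlphaL (m : ℕ) (k : ℤ) (L : ℕ) : ℤ :=
  ∑ l ∈ Finset.range (L + 1), alternatingAlpha m k (l : ℤ) ((L - l : ℕ) : ℤ)

lemma alpha_neg (m : ℕ) (k l l' : ℤ) (h : l < 0 ∨ l' < 0) : alternatingAlpha m k l l' = 0 := by
  cases m with
  | zero => rw [alternatingAlpha, if_neg]; rintro ⟨_, h1, h2⟩; omega
  | succ m => rw [alternatingAlpha, if_pos h]

lemma alphaL_succ (m : ℕ) (k : ℤ) (L : ℕ) :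
    alternatingAlphaL (m + 1) k L =
      alternatingAlphaL m (k - 1) L + (if L = 0 then 0 else alternatingAlphaL m (-k) (L - 1)) := by
  have step : ∀ l ∈ Finset.range (L + 1),
      alternatingAlpha (m + 1) k (l : ℤ) ((L - l : ℕ) : ℤ) =
        alternatingAlpha m (k - 1) ((L - l : ℕ) : ℤ) (l : ℤ) +
        alternatingAlpha m (-k) ((L - l : ℕ) : ℤ) ((l : ℤ) - 1) := by
    intro l hl
    simp only [Finset.mem_range] at hl
    rw [alternatingAlpha, if_neg (by omega)]
  rw [alternatingAlphaL, Finset.sum_congr rfl step, Finset.sum_add_distrib]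
  congr 1
  · -- first sum = alternatingAlphaL m (k-1) L
    rw [alternatingAlphaL]
    rw [← Finset.sum_range_reflect (fun l => alternatingAlpha m (k-1) (l : ℤ) ((L - l : ℕ) : ℤ)) (L+1)]
    apply Finset.sum_congr rfl
    intro l hl
    simp only [Finset.mem_range] at hl
    have h1 : ((L - (L + 1 - 1 - l) : ℕ) : ℤ) = (l : ℤ) := by omega
    have h2 : (((L + 1 - 1 - l : ℕ)) : ℤ) = ((L - l : ℕ) : ℤ) := by omega
    rw [h1, h2]
  · -- second sum
    rcases Nat.eq_zero_or_pos L with hL | hL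
    · subst hL
      simp [alpha_neg]
    · rw [if_neg (by omega)]
      obtain ⟨P, rfl⟩ : ∃ P, L = P + 1 := ⟨L - 1, by omega⟩
      rw [Finset.sum_range_succ']
      have last : alternatingAlpha m (-k) ((P + 1 - 0 : ℕ) : ℤ) ((0 : ℕ) - 1 : ℤ) = 0 := by
        apply alpha_neg; right; norm_num
      rw [last, add_zero]
      have : (P + 1 - 1 : ℕ) = P := rfl
      rw [this, alternatingAlphaL]
      rw [← Finset.sum_range_reflect (fun l => alternatingAlpha m (-k) (l : ℤ) ((P - l : ℕ) : ℤ)) (P+1)]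
      apply Finset.sum_congr rfl
      intro l hl
      simp only [Finset.mem_range] at hl
      have h1 : ((P + 1 - (l + 1) : ℕ) : ℤ) = ((P + 1 - 1 - l : ℕ) : ℤ) := by omega
      have h2 : (((l + 1 : ℕ)) : ℤ) - 1 = ((P - (P + 1 - 1 - l) : ℕ) : ℤ) := by push_cast; omega
      rw [h1, h2]

def Fnat (L a b : ℕ) : ℕ :=
  if L % 2 = 1 then (a + L / 2).choose a * (b + L / 2).choose b
  else (a + L / 2).choose a * (b + L / 2 - 1).choose b

lemma fnat_rec (L a b : ℕ) (h : 1 ≤ a + b + L) :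
    Fnat L a b = (if a = 0 then 0 else Fnat L (a - 1) b) + (if L = 0 then 0 else Fnat (L - 1) b a) := by
  rcases Nat.even_or_odd L with ⟨j, hL⟩ | ⟨j, hL⟩
  · rcases Nat.eq_zero_or_pos j with hj | hj
    · -- L = 0
      subst hj
      have hL0 : L = 0 := by omega
      subst hL0
      rcases Nat.eq_zero_or_pos a with ha | ha
      · subst ha
        have hb : 1 ≤ b := by omega
        simp [Fnat, Nat.choose_eq_zero_of_lt (show b - 1 < b by omega)]
      · obtain ⟨s, rfl⟩ : ∃ s, a = s + 1 := ⟨a - 1, by omega⟩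
        simp [Fnat, Nat.choose_self]
    · -- L = 2j, j ≥ 1 : L even ≥ 2
      obtain ⟨i, rfl⟩ : ∃ i, j = i + 1 := ⟨j - 1, by omega⟩
      have e1 : Fnat L a b = (a + (i+1)).choose a * (b + i).choose b := by
        rw [Fnat, if_neg (by omega)]
        congr 2 <;> omega
      have e2 : L - 1 = 2 * i + 1 := by omega
      have e3 : Fnat (L-1) b a = (b + i).choose b * (a + i).choose a := by
        rw [Fnat, e2, if_pos (by omega)]
        congr 2 <;> omega
      rw [e1, e3, if_neg (show ¬ (L = 0) by omega)]
      rcases Nat.eq_zero_or_pos a with ha | ha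
      · subst ha; simp [Fnat, show L % 2 = 0 by omega]
      · obtain ⟨s, rfl⟩ : ∃ s, a = s + 1 := ⟨a - 1, by omega⟩
        rw [if_neg (show ¬ (s + 1 = 0) by omega)]
        have e4 : Fnat L s b = (s + (i+1)).choose s * (b + i).choose b := by
          rw [Fnat, if_neg (by omega)]
          congr 2 <;> omega
        have : (s + 1 - 1) = s := rfl
        rw [this, e4]
        have pascal : (s + 1 + (i + 1)).choose (s + 1) = (s + (i+1)).choose s + (s + (i+1)).choose (s+1) := by
          have := Nat.choose_succ_succ (s + (i+1)) s
          rw [← this]; congr 1; omega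
        have e5 : (s + 1 + i) = (s + (i + 1)) := by omega
        rw [e5] at *
        rw [pascal]; ring
  · -- L = 2j+1 odd
    have e1 : Fnat L a b = (a + j).choose a * (b + j).choose b := by
      rw [Fnat, if_pos (by omega)]
      congr 2 <;> omega
    have e2 : L - 1 = 2 * j := by omega
    have e3 : Fnat (L-1) b a = (b + j).choose b * (a + j - 1).choose a := by
      rw [Fnat, e2, if_neg (by omega)]
      congr 2 <;> omega
    rw [e1, e3, if_neg (show ¬ (L = 0) by omega)]
    rcases Nat.eq_zero_or_pos a with ha | ha
    · subst ha; simp [Fnat, show L % 2 = 1 by omega]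
    · obtain ⟨s, rfl⟩ : ∃ s, a = s + 1 := ⟨a - 1, by omega⟩
      rw [if_neg (show ¬ (s + 1 = 0) by omega)]
      have e4 : Fnat L s b = (s + j).choose s * (b + j).choose b := by
        rw [Fnat, if_pos (by omega)]
        congr 2 <;> omega
      have : (s + 1 - 1) = s := rfl
      rw [this, e4]
      have e5 : (s + 1 + j - 1) = s + j := by omega
      rw [e5]
      have pascal : (s + 1 + j).choose (s + 1) = (s + j).choose s + (s + j).choose (s+1) := by
        have := Nat.choose_succ_succ (s + j) s
        rw [← this]; congr 1; omega
      rw [pascal]; ring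

def Fc (m : ℕ) (k : ℤ) (L : ℕ) : ℤ :=
  if L ≤ m ∧ -((m : ℤ) - L) ≤ k ∧ k ≤ (m : ℤ) - L ∧ ((m : ℤ) + k - L) % 2 = 0 then
    if L % 2 = 1 then
      (Nat.choose (((m : ℤ) + k - 1) / 2).toNat (((m : ℤ) + k - L) / 2).toNat *
       Nat.choose (((m : ℤ) - k - 1) / 2).toNat (((m : ℤ) - k - L) / 2).toNat : ℕ)
    else
      (Nat.choose (((m : ℤ) + k) / 2).toNat (((m : ℤ) + k - L) / 2).toNat *
       Nat.choose (((m : ℤ) - k - 2) / 2).toNat (((m : ℤ) - k - L) / 2).toNat : ℕ)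
  else 0

lemma Fc_eq_Fnat (m : ℕ) (k : ℤ) (L a b : ℕ)
    (hg : L ≤ m ∧ -((m : ℤ) - L) ≤ k ∧ k ≤ (m : ℤ) - L ∧ ((m : ℤ) + k - L) % 2 = 0)
    (ha : (m : ℤ) + k = 2 * a + L) (hb : (m : ℤ) - k = 2 * b + L) :
    Fc m k L = Fnat L a b := by
  rw [Fc, if_pos hg, Fnat]
  obtain ⟨h1, h2, h3, h4⟩ := hg
  by_cases hp : L % 2 = 1
  · rw [if_pos hp, if_pos hp]
    have c1 : (((m : ℤ) + k - 1) / 2).toNat = a + L / 2 := by omega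
    have c2 : (((m : ℤ) + k - L) / 2).toNat = a := by omega
    have c3 : (((m : ℤ) - k - 1) / 2).toNat = b + L / 2 := by omega
    have c4 : (((m : ℤ) - k - L) / 2).toNat = b := by omega
    rw [c1, c2, c3, c4]
  · rw [if_neg hp, if_neg hp]
    have c1 : (((m : ℤ) + k) / 2).toNat = a + L / 2 := by omega
    have c2 : (((m : ℤ) + k - L) / 2).toNat = a := by omega
    have c3 : (((m : ℤ) - k - 2) / 2).toNat = b + L / 2 - 1 := by omega
    have c4 : (((m : ℤ) - k - L) / 2).toNat = b := by omega
    rw [c1, c2, c3, c4]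

lemma Fc_succ (m : ℕ) (k : ℤ) (L : ℕ) :
    Fc (m + 1) k L = Fc m (k - 1) L + (if L = 0 then 0 else Fc m (-k) (L - 1)) := by
  by_cases hg : L ≤ m + 1 ∧ -(((m + 1 : ℕ) : ℤ) - L) ≤ k ∧ k ≤ ((m + 1 : ℕ) : ℤ) - L ∧
      (((m + 1 : ℕ) : ℤ) + k - L) % 2 = 0
  · obtain ⟨h1, h2, h3, h4⟩ := hg
    obtain ⟨a, ha⟩ : ∃ a : ℕ, ((m : ℤ) + 1) + k = 2 * a + L :=
      ⟨((((m : ℤ) + 1) + k - L) / 2).toNat, by push_cast at h2 h3 h4 ⊢; omega⟩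
    obtain ⟨b, hb⟩ : ∃ b : ℕ, ((m : ℤ) + 1) - k = 2 * b + L :=
      ⟨((((m : ℤ) + 1) - k - L) / 2).toNat, by push_cast at h2 h3 h4 ⊢; omega⟩
    push_cast at h2 h3 h4
    rw [Fc_eq_Fnat (m + 1) k L a b ⟨h1, by push_cast; omega, by push_cast; omega, by push_cast; omega⟩
      (by push_cast; omega) (by push_cast; omega)]
    have hterm2 : (if L = 0 then (0 : ℤ) else Fc m (-k) (L - 1)) =
        (if L = 0 then (0 : ℤ) else (Fnat (L - 1) b a : ℤ)) := by
      rcases Nat.eq_zero_or_pos L with h | h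
      · simp [h]
      · rw [if_neg (by omega), if_neg (by omega)]
        exact Fc_eq_Fnat m (-k) (L-1) b a
          ⟨by omega, by push_cast; omega, by push_cast; omega, by push_cast; omega⟩
          (by push_cast; omega) (by push_cast; omega)
    rw [hterm2]
    have hterm1 : Fc m (k - 1) L = (if a = 0 then (0 : ℤ) else (Fnat L (a - 1) b : ℤ)) := by
      rcases Nat.eq_zero_or_pos a with h | h
      · rw [if_pos h, Fc, if_neg]
        intro ⟨g1, g2, g3, g4⟩
        omega
      · rw [if_neg (by omega)]
        exact Fc_eq_Fnat m (k - 1) L (a - 1) b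
          ⟨by omega, by push_cast; omega, by push_cast; omega, by push_cast; omega⟩
          (by push_cast; omega) (by push_cast; omega)
    rw [hterm1]
    have := fnat_rec L a b (by omega)
    have hc : ((Fnat L a b : ℕ) : ℤ) =
        ((if a = 0 then 0 else Fnat L (a - 1) b) + (if L = 0 then 0 else Fnat (L - 1) b a) : ℕ) := by
      exact_mod_cast congrArg (Nat.cast : ℕ → ℤ) this
    rw [hc]
    push_cast [apply_ite (Nat.cast : ℕ → ℤ)]
    ring
  · rw [Fc, if_neg hg]
    have t1 : Fc m (k - 1) L = 0 := by
      rw [Fc, if_neg]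
      intro ⟨g1, g2, g3, g4⟩
      exact hg (by push_cast at *; refine ⟨by omega, by omega, by omega, by omega⟩)
    have t2 : (if L = 0 then (0 : ℤ) else Fc m (-k) (L - 1)) = 0 := by
      rcases Nat.eq_zero_or_pos L with h | h
      · simp [h]
      · rw [if_neg (by omega), Fc, if_neg]
        intro ⟨g1, g2, g3, g4⟩
        exact hg (by push_cast at *; refine ⟨by omega, by omega, by omega, by omega⟩)
    rw [t1, t2]; ring

lemma bridge (m : ℕ) : ∀ (k : ℤ) (L : ℕ), alternatingAlphaL m k L = Fc m k L := by
  induction m with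
  | zero =>
    intro k L
    cases L with
    | zero =>
      rw [alternatingAlphaL, show (0 : ℕ) + 1 = 1 from rfl, Finset.sum_range_one]
      have e : alternatingAlpha 0 k ((0 : ℕ) : ℤ) (((0 : ℕ) - 0 : ℕ) : ℤ) =
          if k = 0 ∧ (0 : ℤ) = 0 ∧ (0 : ℤ) = 0 then 1 else 0 := rfl
      rw [e]
      by_cases hk : k = 0
      · subst hk
        rw [if_pos (by norm_num), Fc, if_pos (by norm_num)]
        norm_num
      · rw [if_neg (by tauto), Fc, if_neg (by push_cast; omega)]
    | succ P =>
      rw [alternatingAlphaL, Fc, if_neg (by omega)]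
      apply Finset.sum_eq_zero
      intro l hl
      simp only [Finset.mem_range] at hl
      rw [alternatingAlpha, if_neg]
      rintro ⟨h1, h2, h3⟩
      omega
  | succ m ih =>
    intro k L
    rw [alphaL_succ, ih, Fc_succ]
    rcases Nat.eq_zero_or_pos L with h | h
    · simp [h]
    · rw [if_neg (by omega), if_neg (by omega), ih]

/-- The closed formulas for `α^{(m)}_{k,L}`:
(i) `α^{(m)}_{k,L} = 0` unless `L ≤ m`, `|k| ≤ m − L` and `m + k ≡ L (mod 2)`;
(ii) `α^{(m)}_{k,0} = 1` if `k = m` and `0` otherwise;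
(iii) for even `L` with `2 ≤ L ≤ m`, `|k| ≤ m − L`, `m + k ≡ L (mod 2)`:
  `α^{(m)}_{k,L} = C((m+k)/2, (m+k−L)/2)·C((m−k−2)/2, (m−k−L)/2)`;
(iv) for odd `L ≤ m`, `|k| ≤ m − L`, `m + k ≡ L (mod 2)`:
  `α^{(m)}_{k,L} = C((m+k−1)/2, (m+k−L)/2)·C((m−k−1)/2, (m−k−L)/2)`. -/
theorem alternatingAlphaL_closed_formula :
    (∀ (m L : ℕ) (k : ℤ), alternatingAlphaL m k L ≠ 0 →
      L ≤ m ∧ |k| ≤ (m : ℤ) - L ∧ ((m : ℤ) + k - L) % 2 = 0) ∧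
    (∀ (m : ℕ) (k : ℤ), alternatingAlphaL m k 0 = if k = (m : ℤ) then 1 else 0) ∧
    (∀ (m L : ℕ) (k : ℤ), L % 2 = 0 → 2 ≤ L → L ≤ m → |k| ≤ (m : ℤ) - L →
      ((m : ℤ) + k - L) % 2 = 0 →
      alternatingAlphaL m k L =
        (Nat.choose (((m : ℤ) + k) / 2).toNat ((((m : ℤ) + k - L)) / 2).toNat *
         Nat.choose (((m : ℤ) - k - 2) / 2).toNat ((((m : ℤ) - k - L)) / 2).toNat : ℕ)) ∧
    (∀ (m L : ℕ) (k : ℤ), L % 2 = 1 → L ≤ m → |k| ≤ (m : ℤ) - L →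
      ((m : ℤ) + k - L) % 2 = 0 →
      alternatingAlphaL m k L =
        (Nat.choose (((m : ℤ) + k - 1) / 2).toNat ((((m : ℤ) + k - L)) / 2).toNat *
         Nat.choose (((m : ℤ) - k - 1) / 2).toNat ((((m : ℤ) - k - L)) / 2).toNat : ℕ)) := by
  refine ⟨?_, ?_, ?_, ?_⟩
  · intro m L k h
    rw [bridge m k L, Fc] at h
    by_cases hg : L ≤ m ∧ -((m : ℤ) - L) ≤ k ∧ k ≤ (m : ℤ) - L ∧ ((m : ℤ) + k - L) % 2 = 0
    · exact ⟨hg.1, abs_le.mpr ⟨hg.2.1, hg.2.2.1⟩, hg.2.2.2⟩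
    · rw [if_neg hg] at h; exact absurd rfl h
  · intro m k
    rw [bridge m k 0]
    by_cases hk : k = (m : ℤ)
    · subst hk
      rw [if_pos rfl, Fc, if_pos ⟨by omega, by push_cast; omega, by push_cast; omega, by
        push_cast; omega⟩, if_neg (by omega)]
      have c1 : (((m : ℤ) + m) / 2).toNat = m := by omega
      have c2 : (((m : ℤ) + m - (0 : ℕ)) / 2).toNat = m := by push_cast; omega
      have c3 : (((m : ℤ) - m - 2) / 2).toNat = 0 := by omega
      have c4 : (((m : ℤ) - m - (0 : ℕ)) / 2).toNat = 0 := by push_cast; omega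
      rw [c1, c2, c3, c4, Nat.choose_self, Nat.choose_self]
      norm_num
    · rw [if_neg hk]
      by_cases hg : (0 : ℕ) ≤ m ∧ -((m : ℤ) - (0 : ℕ)) ≤ k ∧ k ≤ (m : ℤ) - (0 : ℕ) ∧
          ((m : ℤ) + k - (0 : ℕ)) % 2 = 0
      · obtain ⟨a, ha⟩ : ∃ a : ℕ, (m : ℤ) + k = 2 * a + (0 : ℕ) :=
          ⟨(((m : ℤ) + k) / 2).toNat, by push_cast at hg ⊢; omega⟩
        obtain ⟨b, hb⟩ : ∃ b : ℕ, (m : ℤ) - k = 2 * b + (0 : ℕ) :=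
          ⟨(((m : ℤ) - k) / 2).toNat, by push_cast at hg ⊢; omega⟩
        rw [Fc_eq_Fnat m k 0 a b hg ha hb]
        have hb1 : 1 ≤ b := by push_cast at hb; omega
        have : Fnat 0 a b = 0 := by
          simp [Fnat, Nat.choose_eq_zero_of_lt (show b - 1 < b by omega)]
        rw [this]; norm_num
      · rw [Fc, if_neg hg]
  · intro m L k h0 h2 hLm hk hp
    rw [bridge m k L, Fc,
      if_pos ⟨hLm, (abs_le.mp hk).1, (abs_le.mp hk).2, hp⟩, if_neg (by omega)]
  · intro m L k h1 hLm hk hp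
    rw [bridge m k L, Fc,
      if_pos ⟨hLm, (abs_le.mp hk).1, (abs_le.mp hk).2, hp⟩, if_pos h1]
end

section
/- For every m ≥ 1 and every k with 1 ≤ k ≤ m and k ≡ m (mod 2), the following identity of polynomials in ℤ[β] holds: (m+k) · a_k^{(m)}(β,β) = 2k · Σ_{p=0}^{⌊(m−1)/2⌋} β^{2p} α^{(m)}_{k,2p}, where α^{(m)}_{k,L} := Σ_{l,l' ≥ 0, l+l' = L} α^{(m)}_{k,l,l'}. -/
/-- The coefficient `a_k^{(m)}(β,β') = Σ_{l,l'≥0} β^l β'^{l'} (α^{(m)}_{k,l,l'} − α^{(m)}_{−k,l',l})`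
(a finite sum). -/
noncomputable def aCoeff (R : Type*) [CommRing R] (m k : ℕ) (b b' : R) : R :=
  ∑ᶠ (l : ℕ) (l' : ℕ), b ^ l * b' ^ l' *
    ((alternatingAlpha m (k : ℤ) (l : ℤ) (l' : ℤ) -
      alternatingAlpha m (-(k : ℤ)) (l' : ℤ) (l : ℤ) : ℤ) : R)

lemma alpha_big (m : ℕ) : ∀ (k l l' : ℤ), (m : ℤ) < l + l' → 0 ≤ l → 0 ≤ l' →
    alternatingAlpha m k l l' = 0 := by
  induction m with
  | zero =>
    intro k l l' h hl hl'
    simp only [alternatingAlpha]; rw [if_neg]; omega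
  | succ m ih =>
    intro k l l' h hl hl'
    rw [alternatingAlpha, if_neg (by omega)]
    rcases le_or_gt 0 (l - 1) with h1 | h1
    · rw [ih _ _ _ (by omega) hl' hl, ih _ _ _ (by omega) hl' h1, add_zero]
    · rw [ih _ _ _ (by omega) hl' hl, alpha_neg _ _ _ _ (Or.inr h1), add_zero]

lemma AL_rev (m : ℕ) (n : ℕ) (k' : ℤ) : ∑ l ∈ Finset.range (n + 1),
    alternatingAlpha m k' (((n - l : ℕ)) : ℤ) (l : ℤ) = alternatingAlphaL m k' n := by
  rw [alternatingAlphaL, ← Finset.sum_range_reflect]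
  apply Finset.sum_congr rfl
  intro l hl
  simp only [Finset.mem_range] at hl
  congr 2 <;> · push_cast [Nat.sub_sub_self (by omega : l ≤ n)]; omega

lemma AL_rec_zero (m : ℕ) (k : ℤ) :
    alternatingAlphaL (m + 1) k 0 = alternatingAlphaL m (k - 1) 0 := by
  simp only [alternatingAlphaL, zero_add, Finset.sum_range_one, Nat.sub_zero, Nat.cast_zero,
    Nat.cast_ofNat]
  show alternatingAlpha (m+1) k 0 0 = _
  rw [alternatingAlpha, if_neg (by norm_num)]
  norm_num
  exact alpha_neg m (-k) 0 (-1) (by norm_num)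

lemma AL_rec (m : ℕ) (k : ℤ) (L : ℕ) :
    alternatingAlphaL (m + 1) k (L + 1) =
      alternatingAlphaL m (k - 1) (L + 1) + alternatingAlphaL m (-k) L := by
  simp only [alternatingAlphaL]
  have step : ∀ l ∈ Finset.range (L + 2),
      alternatingAlpha (m + 1) k (l : ℤ) ((L + 1 - l : ℕ) : ℤ) =
      alternatingAlpha m (k - 1) ((L + 1 - l : ℕ) : ℤ) (l : ℤ) +
      alternatingAlpha m (-k) ((L + 1 - l : ℕ) : ℤ) ((l : ℤ) - 1) := by
    intro l hl
    rw [alternatingAlpha, if_neg (by push_cast; omega)]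
  rw [Finset.sum_congr rfl step, Finset.sum_add_distrib]
  congr 1
  · exact AL_rev m (L + 1) (k - 1)
  · rw [Finset.sum_range_succ'];
    rw [show ((L + 1 - 0 : ℕ) : ℤ) = (L + 1 : ℕ) by norm_num]
    rw [alpha_neg m (-k) _ (((0:ℕ) : ℤ) - 1) (by norm_num)]
    rw [add_zero]
    refine Eq.trans ?_ (AL_rev m L (-k))
    apply Finset.sum_congr rfl
    intro l hl
    simp only [Finset.mem_range] at hl
    congr 2 <;> · push_cast [Nat.sub_sub_self]; omega

/- ### The closed form -/

def comps : ℕ → ℕ → ℕ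
  | s, 0 => if s = 0 then 1 else 0
  | s, t + 1 => (s + t).choose t

def pathsCount (a b L : ℕ) : ℕ := (a + L / 2).choose (L / 2) * comps b ((L + 1) / 2)

def Bf (m : ℕ) (k : ℤ) (L : ℕ) : ℤ :=
  ∑ a ∈ Finset.range (m + 1), ∑ b ∈ Finset.range (m + 1),
    if a + b + L = m ∧ (a : ℤ) - b = k then (pathsCount a b L : ℤ) else 0

lemma Bf_eq (m a b L : ℕ) (k : ℤ) (h : a + b + L = m) (hk : (a : ℤ) - b = k) :
    Bf m k L = pathsCount a b L := by
  subst hk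
  rw [Bf, Finset.sum_eq_single a, Finset.sum_eq_single b, if_pos ⟨h, rfl⟩]
  · intro b' _ hb'
    rw [if_neg]; rintro ⟨h1, h2⟩; omega
  · intro ha; exact absurd (Finset.mem_range.2 (by omega)) ha
  · intro a' _ ha'
    apply Finset.sum_eq_zero
    intro b' _
    rw [if_neg]; rintro ⟨h1, h2⟩; omega
  · intro ha; exact absurd (Finset.mem_range.2 (by omega)) ha

lemma Bf_eq_zero (m : ℕ) (k : ℤ) (L : ℕ)
    (h : ∀ a b : ℕ, a + b + L = m → (a : ℤ) - b ≠ k) : Bf m k L = 0 := by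
  rw [Bf]
  apply Finset.sum_eq_zero; intro a _
  apply Finset.sum_eq_zero; intro b _
  rw [if_neg]; rintro ⟨h1, h2⟩; exact h a b h1 h2

lemma comps_zero (t : ℕ) : comps 0 t = 1 := by
  cases t with
  | zero => rfl
  | succ t => simp [comps]

lemma comps_succ (s t : ℕ) : comps s (t + 1) = (s + t).choose t := rfl

lemma choose_succ_comps (a p : ℕ) :
    (a + 1 + p).choose p = (a + p).choose p + comps (a + 1) p := by
  cases p with
  | zero => simp [comps]
  | succ q =>
    rw [comps_succ]
    have e : a + 1 + (q + 1) = (a + q + 1) + 1 := by ring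
    have e2 : a + (q + 1) = a + q + 1 := by ring
    have e3 : a + 1 + q = a + q + 1 := by ring
    rw [e, e2, e3, Nat.choose_succ_succ]
    exact Nat.add_comm _ _

lemma paths_pascal (a b L : ℕ) :
    pathsCount (a + 1) b (L + 1) = pathsCount a b (L + 1) + pathsCount b (a + 1) L := by
  rcases Nat.even_or_odd L with ⟨p, hp⟩ | ⟨p, hp⟩
  · subst hp
    have h1 : (p + p + 1 + 1) / 2 = p + 1 := by omega
    have h2 : (p + p + 1) / 2 = p := by omega
    have h3 : (p + p + 2) / 2 = p + 1 := by omega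
    have h4 : (p + p) / 2 = p := by omega
    have h5 : (p + p + 1) / 2 = p := by omega
    simp only [pathsCount, h1, h2, h3, h4, h5, comps_succ, choose_succ_comps a p]
    ring
  · subst hp
    have h1 : (2 * p + 1 + 1) / 2 = p + 1 := by omega
    have h2 : (2 * p + 1 + 1 + 1) / 2 = p + 1 := by omega
    have h3 : (2 * p + 1) / 2 = p := by omega
    simp only [pathsCount, h1, h2, h3, comps_succ]
    have : a + 1 + (p + 1) = (a + (p + 1)) + 1 := by ring
    rw [this, Nat.choose_succ_succ (a + (p + 1)) p]
    have e1 : a + 1 + p = a + (p + 1) := by ring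
    rw [e1]
    ring

lemma paths_zero_left (b L : ℕ) : pathsCount 0 b (L + 1) = pathsCount b 0 L := by
  rcases Nat.even_or_odd L with ⟨p, hp⟩ | ⟨p, hp⟩
  · subst hp
    have h1 : (p + p + 1) / 2 = p := by omega
    have h2 : (p + p + 1 + 1) / 2 = p + 1 := by omega
    have h3 : (p + p) / 2 = p := by omega
    simp only [pathsCount, h1, h2, h3, comps_succ, comps_zero, zero_add,
      Nat.choose_self, one_mul, mul_one]
  · subst hp
    have h1 : (2 * p + 1 + 1) / 2 = p + 1 := by omega
    have h2 : (2 * p + 1 + 1 + 1) / 2 = p + 1 := by omega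
    have h3 : (2 * p + 1) / 2 = p := by omega
    simp only [pathsCount, h1, h2, h3, comps_succ, comps_zero, zero_add,
      Nat.choose_self, one_mul, mul_one]

lemma Bf_rec_zero (m : ℕ) (k : ℤ) : Bf (m + 1) k 0 = Bf m (k - 1) 0 := by
  by_cases h : ∃ a b : ℕ, a + b + 0 = m + 1 ∧ (a : ℤ) - b = k
  · obtain ⟨a, b, h1, h2⟩ := h
    rcases Nat.eq_zero_or_pos a with rfl | ha
    · rw [Bf_eq _ 0 b 0 k h1 h2, Bf_eq_zero, pathsCount]
      · simp [comps, show b ≠ 0 by omega]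
      · intro a' b' h'; omega
    · rw [Bf_eq _ a b 0 k h1 h2, Bf_eq m (a - 1) b 0 (k - 1) (by omega) (by push_cast; omega)]
      simp [pathsCount]
  · rw [Bf_eq_zero _ _ _ (fun a b hab hk => h ⟨a, b, hab, hk⟩), Bf_eq_zero]
    intro a b hab hk
    exact h ⟨a + 1, b, by omega, by push_cast; omega⟩

lemma Bf_rec (m : ℕ) (k : ℤ) (L : ℕ) :
    Bf (m + 1) k (L + 1) = Bf m (k - 1) (L + 1) + Bf m (-k) L := by
  by_cases h : ∃ a b : ℕ, a + b + (L + 1) = m + 1 ∧ (a : ℤ) - b = k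
  · obtain ⟨a, b, h1, h2⟩ := h
    rcases Nat.eq_zero_or_pos a with rfl | ha
    · rw [Bf_eq _ 0 b (L + 1) k h1 h2,
        Bf_eq_zero m (k - 1) (L + 1) (by intro a' b' h'; omega),
        Bf_eq m b 0 L (-k) (by omega) (by push_cast; omega), zero_add,
        paths_zero_left]
    · obtain ⟨a', rfl⟩ : ∃ a', a = a' + 1 := ⟨a - 1, by omega⟩
      rw [Bf_eq _ (a' + 1) b (L + 1) k h1 h2,
        Bf_eq m a' b (L + 1) (k - 1) (by omega) (by push_cast; omega),
        Bf_eq m b (a' + 1) L (-k) (by omega) (by push_cast; omega),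
        paths_pascal]
      push_cast
      ring
  · rw [Bf_eq_zero _ _ _ (fun a b hab hk => h ⟨a, b, hab, hk⟩), Bf_eq_zero, Bf_eq_zero, add_zero]
    · intro a b hab hk
      exact h ⟨b, a, by omega, by push_cast; omega⟩
    · intro a b hab hk
      exact h ⟨a + 1, b, by omega, by push_cast; omega⟩

lemma Bf_odd (m : ℕ) (k : ℤ) (p : ℕ) : Bf m k (2 * p + 1) = Bf m (-k) (2 * p + 1) := by
  by_cases h : ∃ a b : ℕ, a + b + (2 * p + 1) = m ∧ (a : ℤ) - b = k
  · obtain ⟨a, b, h1, h2⟩ := h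
    rw [Bf_eq _ a b _ k h1 h2, Bf_eq m b a _ (-k) (by omega) (by push_cast; omega)]
    have h3 : (2 * p + 1) / 2 = p := by omega
    have h4 : (2 * p + 1 + 1) / 2 = p + 1 := by omega
    simp only [pathsCount, h3, h4, comps_succ]
    ring
  · rw [Bf_eq_zero _ _ _ (fun a b hab hk => h ⟨a, b, hab, hk⟩), Bf_eq_zero]
    intro a b hab hk
    exact h ⟨b, a, by omega, by push_cast; omega⟩

lemma Bf_even (m : ℕ) (k : ℤ) (hk : 1 ≤ k) (p : ℕ) :
    ((m : ℤ) - k) * Bf m k (2 * p) = ((m : ℤ) + k) * Bf m (-k) (2 * p) := by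
  by_cases h : ∃ a b : ℕ, a + b + 2 * p = m ∧ (a : ℤ) - b = k
  · obtain ⟨a, b, h1, h2⟩ := h
    rw [Bf_eq _ a b _ k h1 h2, Bf_eq m b a _ (-k) (by omega) (by push_cast; omega)]
    have hm : ((m : ℤ) - k) = 2 * b + 2 * p := by push_cast [← h1]; omega
    have hm' : ((m : ℤ) + k) = 2 * a + 2 * p := by push_cast [← h1]; omega
    rw [hm, hm']
    have h3 : (2 * p) / 2 = p := by omega
    have h4 : (2 * p + 1) / 2 = p := by omega
    simp only [pathsCount, h3, h4]
    cases p with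
    | zero =>
      have ha : 1 ≤ a := by omega
      have hca : comps a 0 = 0 := by simp only [comps]; rw [if_neg (by omega)]
      rcases Nat.eq_zero_or_pos b with rfl | hb
      · rw [hca]; push_cast; ring
      · have hcb : comps b 0 = 0 := by simp only [comps]; rw [if_neg (by omega)]
        rw [hca, hcb]; push_cast; ring
    | succ q =>
      rw [comps_succ, comps_succ]
      have key : ∀ x : ℕ, ((x : ℤ) + (q + 1)) * (x + q).choose q = (q + 1) * (x + q + 1).choose (q + 1) := by
        intro x
        have h : (x + q + 1) * (x + q).choose q = (x + q + 1).choose (q + 1) * (q + 1) := by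
          simpa [Nat.succ_eq_add_one] using Nat.add_one_mul_choose_eq (x + q) q
        calc ((x : ℤ) + (q + 1)) * (x + q).choose q
            = (((x + q + 1) * (x + q).choose q : ℕ) : ℤ) := by push_cast; ring
          _ = (((x + q + 1).choose (q + 1) * (q + 1) : ℕ) : ℤ) := by rw [h]
          _ = (q + 1) * (x + q + 1).choose (q + 1) := by push_cast; ring
      push_cast
      have e1 : ((2:ℤ) * b + 2 * (q + 1)) * (((a + (q+1)).choose (q+1)) * ((b + q).choose q)) =
          2 * (((a + (q+1)).choose (q+1)) : ℤ) * (((b:ℤ) + (q+1)) * ((b + q).choose q)) := by ring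
      have e2 : ((2:ℤ) * a + 2 * (q + 1)) * (((b + (q+1)).choose (q+1)) * ((a + q).choose q)) =
          2 * (((b + (q+1)).choose (q+1)) : ℤ) * (((a:ℤ) + (q+1)) * ((a + q).choose q)) := by ring
      rw [e1, e2, key a, key b]
      have : a + q + 1 = a + (q + 1) := by ring
      rw [this]
      have : b + q + 1 = b + (q + 1) := by ring
      rw [this]
      ring
  · rw [Bf_eq_zero _ _ _ (fun a b hab hk' => h ⟨a, b, hab, hk'⟩), Bf_eq_zero]
    · ring
    · intro a b hab hk'
      exact h ⟨b, a, by omega, by push_cast; omega⟩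

lemma Bf_van (m : ℕ) (k : ℤ) (hk : 1 ≤ k) (p : ℕ) (hp : (m - 1) / 2 < p) :
    Bf m k (2 * p) = 0 := by
  apply Bf_eq_zero
  intro a b hab hk'
  omega

lemma A_eq_B : ∀ (m : ℕ) (k : ℤ) (L : ℕ), alternatingAlphaL m k L = Bf m k L := by
  intro m
  induction m with
  | zero =>
    intro k L
    cases L with
    | zero =>
      rw [alternatingAlphaL, Finset.sum_range_one]
      by_cases hk : k = 0
      · subst hk
        rw [Bf_eq 0 0 0 0 0 (by omega) (by norm_num)]
        norm_num [alternatingAlpha, pathsCount, comps]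
      · rw [Bf_eq_zero 0 k 0 (by intro a b h1 h2; omega)]
        simp only [alternatingAlpha]
        rw [if_neg (by tauto)]
    | succ L =>
      rw [Bf_eq_zero _ _ _ (by intro a b h1; omega)]
      apply Finset.sum_eq_zero
      intro l hl
      simp only [Finset.mem_range] at hl
      simp only [alternatingAlpha]
      rw [if_neg]
      push_cast
      omega
  | succ m ih =>
    intro k L
    cases L with
    | zero => rw [AL_rec_zero, Bf_rec_zero, ih]
    | succ L => rw [AL_rec, Bf_rec, ih, ih]

/- ### Assembly -/

noncomputable def Fpoly (m k : ℕ) (l l' : ℕ) : Polynomial ℤ :=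
  Polynomial.X ^ l * Polynomial.X ^ l' *
    ((alternatingAlpha m (k : ℤ) (l : ℤ) (l' : ℤ) -
      alternatingAlpha m (-(k : ℤ)) (l' : ℤ) (l : ℤ) : ℤ) : Polynomial ℤ)

lemma Fpoly_zero (m k l l' : ℕ) (h : m < l + l') : Fpoly m k l l' = 0 := by
  rw [Fpoly, alpha_big m _ _ _ (by push_cast; omega) (by positivity) (by positivity),
    alpha_big m _ _ _ (by push_cast; omega) (by positivity) (by positivity)]
  norm_num

lemma aCoeff_expand (m k : ℕ) :
    aCoeff (Polynomial ℤ) m k Polynomial.X Polynomial.X =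
      ∑ L ∈ Finset.range (2 * m + 2),
        ((alternatingAlphaL m (k : ℤ) L - alternatingAlphaL m (-(k : ℤ)) L : ℤ) : Polynomial ℤ)
          * Polynomial.X ^ L := by
  classical
  have inner : ∀ l : ℕ, ∑ᶠ l' : ℕ, Fpoly m k l l' = ∑ l' ∈ Finset.range (m + 1), Fpoly m k l l' := by
    intro l
    apply finsum_eq_finset_sum_of_support_subset
    intro l' hl'
    simp only [Function.mem_support] at hl'
    simp only [Finset.coe_range, Set.mem_Iio]
    by_contra hmem
    exact hl' (Fpoly_zero m k l l' (by omega))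
  have outer : aCoeff (Polynomial ℤ) m k Polynomial.X Polynomial.X
      = ∑ l ∈ Finset.range (m + 1), ∑ l' ∈ Finset.range (m + 1), Fpoly m k l l' := by
    show ∑ᶠ (l : ℕ) (l' : ℕ), Fpoly m k l l' = _
    rw [finsum_congr inner]
    apply finsum_eq_finset_sum_of_support_subset
    intro l hl
    simp only [Function.mem_support] at hl
    simp only [Finset.coe_range, Set.mem_Iio]
    by_contra hmem
    apply hl
    apply Finset.sum_eq_zero
    intro l' _
    exact Fpoly_zero m k l l' (by omega)
  rw [outer]
  -- regroup diagonally
  have regroup : ∑ l ∈ Finset.range (m + 1), ∑ l' ∈ Finset.range (m + 1), Fpoly m k l l'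
      = ∑ L ∈ Finset.range (2 * m + 2), ∑ l ∈ Finset.range (L + 1), Fpoly m k l (L - l) := by
    rw [Finset.sum_sigma', Finset.sum_sigma']
    rw [show ((Finset.range (m + 1)).sigma fun _ => Finset.range (m + 1)) =
        ((Finset.range (m + 1)).sigma fun _ => Finset.range (m + 1)) from rfl]
    have pad : ∑ p ∈ (Finset.range (m + 1)).sigma (fun _ => Finset.range (m + 1)),
          Fpoly m k p.1 p.2
        = ∑ p ∈ ((Finset.range (2 * m + 2)).sigma
            (fun _ => Finset.range (2 * m + 2))).filter (fun p => p.1 + p.2 < 2 * m + 2),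
          Fpoly m k p.1 p.2 := by
      apply Finset.sum_subset
      · intro p hp
        simp only [Finset.mem_sigma, Finset.mem_range] at hp
        simp only [Finset.mem_filter, Finset.mem_sigma, Finset.mem_range]
        omega
      · intro p hp hnp
        simp only [Finset.mem_filter, Finset.mem_sigma, Finset.mem_range] at hp
        simp only [Finset.mem_sigma, Finset.mem_range] at hnp
        exact Fpoly_zero m k p.1 p.2 (by omega)
    rw [pad]
    apply Finset.sum_nbij' (i := fun p => (⟨p.1 + p.2, p.1⟩ : Σ _ : ℕ, ℕ))
      (j := fun q => (⟨q.2, q.1 - q.2⟩ : Σ _ : ℕ, ℕ))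
    · intro p hp
      simp only [Finset.mem_filter, Finset.mem_sigma, Finset.mem_range] at hp ⊢
      omega
    · intro q hq
      simp only [Finset.mem_sigma, Finset.mem_range] at hq
      simp only [Finset.mem_filter, Finset.mem_sigma, Finset.mem_range]
      omega
    · intro p hp
      obtain ⟨a, b⟩ := p
      simp only
      rw [show a + b - a = b by omega]
    · intro q hq
      obtain ⟨L, l⟩ := q
      simp only [Finset.mem_sigma, Finset.mem_range] at hq
      simp only
      rw [show l + (L - l) = L by omega]
    · intro p hp
      simp only
      congr 1
      omega
  rw [regroup]
  apply Finset.sum_congr rfl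
  intro L hL
  have diag : ∀ l ∈ Finset.range (L + 1), Fpoly m k l (L - l)
      = Polynomial.X ^ L * ((alternatingAlpha m (k : ℤ) (l : ℤ) ((L - l : ℕ) : ℤ) -
        alternatingAlpha m (-(k : ℤ)) ((L - l : ℕ) : ℤ) (l : ℤ) : ℤ) : Polynomial ℤ) := by
    intro l hl
    simp only [Finset.mem_range] at hl
    rw [Fpoly, ← pow_add, show l + (L - l) = L by omega]
  rw [Finset.sum_congr rfl diag, ← Finset.mul_sum]
  rw [← Int.cast_sum]
  rw [Finset.sum_sub_distrib]
  rw [show (∑ l ∈ Finset.range (L + 1), alternatingAlpha m (k : ℤ) (l : ℤ) ((L - l : ℕ) : ℤ))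
      = alternatingAlphaL m (k : ℤ) L from rfl]
  rw [AL_rev m L (-(k : ℤ))]
  ring


/-- The one-parameter formula: for `1 ≤ k ≤ m` with `k ≡ m (mod 2)`, in `ℤ[β]`:
`(m+k)·a_k^{(m)}(β,β) = 2k·Σ_{p=0}^{⌊(m−1)/2⌋} β^{2p} α^{(m)}_{k,2p}`. -/
theorem aCoeff_one_parameter (m k : ℕ) (hk1 : 1 ≤ k) (hkm : k ≤ m) (hpar : k % 2 = m % 2) :
    ((m + k : ℕ) : Polynomial ℤ) * aCoeff (Polynomial ℤ) m k Polynomial.X Polynomial.X =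
    ((2 * k : ℕ) : Polynomial ℤ) *
      ∑ p ∈ Finset.range ((m - 1) / 2 + 1),
        ((alternatingAlphaL m (k : ℤ) (2 * p) : ℤ) : Polynomial ℤ) * Polynomial.X ^ (2 * p) := by
  have hk : (1 : ℤ) ≤ (k : ℤ) := by exact_mod_cast hk1
  rw [aCoeff_expand]
  rw [Finset.mul_sum, Finset.mul_sum]
  have perL : ∀ L : ℕ, ((m + k : ℕ) : ℤ) *
      (alternatingAlphaL m (k : ℤ) L - alternatingAlphaL m (-(k : ℤ)) L)
      = (2 * k : ℕ) * (if L % 2 = 0 ∧ L / 2 < (m - 1) / 2 + 1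
          then alternatingAlphaL m (k : ℤ) L else 0) := by
    intro L
    rcases Nat.even_or_odd L with ⟨p, hp⟩ | ⟨p, hp⟩
    · have hL : L = 2 * p := by omega
      subst hL
      have heven := Bf_even m (k : ℤ) hk p
      rw [A_eq_B, A_eq_B]
      by_cases hpb : p < (m - 1) / 2 + 1
      · rw [if_pos ⟨by omega, by omega⟩]
        push_cast
        linear_combination heven
      · rw [if_neg (by push_neg; intro _; omega)]
        have hv : Bf m (k : ℤ) (2 * p) = 0 := Bf_van m (k : ℤ) hk p (by omega)
        have hv' : Bf m (-(k : ℤ)) (2 * p) = 0 := by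
          have hmk : (0 : ℤ) < (m : ℤ) + k := by
            have : (1 : ℤ) ≤ (m : ℤ) := by exact_mod_cast hkm.trans' hk1
            omega
          have := heven
          rw [hv, mul_zero] at this
          exact (mul_eq_zero.1 this.symm).resolve_left (by omega)
        rw [hv, hv']
        ring
    · have hL : L = 2 * p + 1 := by omega
      subst hL
      rw [if_neg (by omega)]
      rw [A_eq_B, A_eq_B, Bf_odd]
      ring
  have step1 : ∀ L ∈ Finset.range (2 * m + 2),
      ((m + k : ℕ) : Polynomial ℤ) *
        (((alternatingAlphaL m (k : ℤ) L - alternatingAlphaL m (-(k : ℤ)) L : ℤ) : Polynomial ℤ)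
          * Polynomial.X ^ L)
      = (if L % 2 = 0 ∧ L / 2 < (m - 1) / 2 + 1 then
          ((2 * k : ℕ) : Polynomial ℤ) *
            (((alternatingAlphaL m (k : ℤ) L : ℤ) : Polynomial ℤ) * Polynomial.X ^ L) else 0) := by
    intro L _
    have h := perL L
    split_ifs with hc
    · rw [if_pos hc] at h
      calc ((m + k : ℕ) : Polynomial ℤ) *
            (((alternatingAlphaL m (k : ℤ) L - alternatingAlphaL m (-(k : ℤ)) L : ℤ) : Polynomial ℤ)
              * Polynomial.X ^ L)
          = ((((m + k : ℕ) : ℤ) * (alternatingAlphaL m (k : ℤ) L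
              - alternatingAlphaL m (-(k : ℤ)) L) : ℤ) : Polynomial ℤ) * Polynomial.X ^ L := by
            push_cast; ring
        _ = ((((2 * k : ℕ) : ℤ) * alternatingAlphaL m (k : ℤ) L : ℤ) : Polynomial ℤ)
              * Polynomial.X ^ L := by rw [h]
        _ = ((2 * k : ℕ) : Polynomial ℤ) *
              (((alternatingAlphaL m (k : ℤ) L : ℤ) : Polynomial ℤ) * Polynomial.X ^ L) := by
            push_cast; ring
    · rw [if_neg hc, mul_zero] at h
      calc ((m + k : ℕ) : Polynomial ℤ) *
            (((alternatingAlphaL m (k : ℤ) L - alternatingAlphaL m (-(k : ℤ)) L : ℤ) : Polynomial ℤ)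
              * Polynomial.X ^ L)
          = ((((m + k : ℕ) : ℤ) * (alternatingAlphaL m (k : ℤ) L
              - alternatingAlphaL m (-(k : ℤ)) L) : ℤ) : Polynomial ℤ) * Polynomial.X ^ L := by
            push_cast; ring
        _ = 0 := by rw [h]; simp
  rw [Finset.sum_congr rfl step1, Finset.sum_ite, Finset.sum_const_zero, add_zero]
  refine Finset.sum_nbij' (i := fun L => L / 2) (j := fun p => 2 * p) ?_ ?_ ?_ ?_ ?_
  · intro L hL
    simp only [Finset.mem_filter, Finset.mem_range] at hL
    simp only [Finset.mem_range]
    omega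
  · intro p hp
    simp only [Finset.mem_range] at hp
    simp only [Finset.mem_filter, Finset.mem_range]
    omega
  · intro L hL
    simp only [Finset.mem_filter, Finset.mem_range] at hL
    show 2 * (L / 2) = L
    omega
  · intro p hp
    show (2 * p) / 2 = p
    omega
  · intro L hL
    simp only [Finset.mem_filter, Finset.mem_range] at hL
    show _ = ((2 * k : ℕ) : Polynomial ℤ) *
      (((alternatingAlphaL m (k : ℤ) (2 * (L / 2)) : ℤ) : Polynomial ℤ)
        * Polynomial.X ^ (2 * (L / 2)))
    rw [show 2 * (L / 2) = L by omega]
end
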